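/- Let Δ be a finite abstract simplicial complex on a finite vertex set V and let κ : V → {1,…,k} be a k-linear coloring of Δ. Then the collection {S_κ : S ∈ Δ} of multisets on {1,…,k} is a multicomplex, i.e., it is closed under taking submultisets: if S ∈ Δ and M′ is a multiset with M′(i) ≤ S_κ(i) for all i, then M′ = S′_κ for some face S′ ∈ Δ. -/
import Mathlib


open Finset Function

variable {V : Type} [Fintype V] [DecidableEq V]

/-- A finite abstract simplicial complex on the vertex set `V`: a collection of
finite subsets of `V` closed under taking subsets, containing every singleton. -/
def IsComplex (Δ : Finset (Finset V)) : Prop :=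
  (∀ S ∈ Δ, ∀ T ⊆ S, T ∈ Δ) ∧ ∀ v : V, ({v} : Finset V) ∈ Δ

/-- `F` is a facet of `Δ`, i.e. a face maximal under inclusion. -/
def IsFacet (Δ : Finset (Finset V)) (F : Finset V) : Prop :=
  F ∈ Δ ∧ ∀ G ∈ Δ, F ⊆ G → F = G

/-- `F(v)`: the set of facets of `Δ` containing the vertex `v`. -/
def facetsOf (Δ : Finset (Finset V)) (v : V) : Set (Finset V) :=
  {F | IsFacet Δ F ∧ v ∈ F}

/-- A surjective map `κ : V → {1,…,k}` is a `k`-linear coloring of `Δ` if for every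
pair of vertices with the same color the facet sets are comparable by inclusion. -/
def IsLinearColoring {k : ℕ} (Δ : Finset (Finset V)) (κ : V → Fin k) : Prop :=
  Surjective κ ∧
  ∀ u v : V, κ u = κ v →
    facetsOf Δ u ⊆ facetsOf Δ v ∨ facetsOf Δ v ⊆ facetsOf Δ u

/-- `S_κ(i)`: the multiplicity of the color `i` in the multiset `S_κ`. -/
def mcount {k : ℕ} (κ : V → Fin k) (S : Finset V) (i : Fin k) : ℕ :=
  (S.filter fun v => κ v = i).card

/-- The collection `{S_κ : S ∈ Δ}` of multisets on `{1,…,k}` is closed under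
taking submultisets, i.e. it is a multicomplex. -/
theorem stmt_2 {k : ℕ} (Δ : Finset (Finset V)) (hΔ : IsComplex Δ)
    (κ : V → Fin k) (hκ : IsLinearColoring Δ κ) :
    ∀ S ∈ Δ, ∀ M' : Fin k → ℕ, (∀ i, M' i ≤ mcount κ S i) →
      ∃ S' ∈ Δ, ∀ i, mcount κ S' i = M' i := by
  intro S hS M' hM'
  choose T hT1 hT2 using fun i => Finset.exists_subset_card_eq (hM' i)
  refine ⟨Finset.univ.biUnion T, ?_, ?_⟩
  · apply hΔ.1 S hS
    intro v hv
    obtain ⟨j, -, hj⟩ := Finset.mem_biUnion.mp hv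
    exact (Finset.mem_filter.mp (hT1 j hj)).1
  · intro i
    have key : (Finset.univ.biUnion T).filter (fun v => κ v = i) = T i := by
      ext v
      simp only [Finset.mem_filter, Finset.mem_biUnion, Finset.mem_univ, true_and]
      constructor
      · rintro ⟨⟨j, hj⟩, hv⟩
        have hvj := (Finset.mem_filter.mp (hT1 j hj)).2
        rwa [hvj.symm.trans hv] at hj
      · intro hv
        exact ⟨⟨i, hv⟩, (Finset.mem_filter.mp (hT1 i hv)).2⟩
    rw [mcount, key, hT2]
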